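/- Let l : ℝ → ℝ be strictly convex and γ-smooth (its derivative is γ-Lipschitz) for some γ > 0, with convex conjugate l*. Let w̄ be a point at which l* is differentiable, let η ∈ (0,1] and v ∈ ℝ. Then any minimizer w⁺ of the one-dimensional problem min_w { −η(v − (l*)'(w̄))·w + D_{l*}(w, w̄) } satisfies (l*)'(w⁺) = (1−η)(l*)'(w̄) + η·v, and consequently w⁺ = l'((1−η)(l*)'(w̄) + η·v). -/

import Mathlib

/-- The convex conjugate of a univariate function. -/
noncomputable def conj (f : ℝ → ℝ) (w : ℝ) : ℝ :=
  sSup (Set.range fun s => w * s - f s)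

/-- The effective domain of the convex conjugate of `f`. -/
def domConj (f : ℝ → ℝ) : Set ℝ :=
  {w | BddAbove (Set.range fun s => w * s - f s)}

lemma tangent_le (l : ℝ → ℝ) (hdiff : Differentiable ℝ l)
    (hc : ConvexOn ℝ Set.univ l) (t s : ℝ) :
    l t + deriv l t * (s - t) ≤ l s := by
  rcases lt_trichotomy s t with h | h | h
  · have h2 := hc.slope_le_deriv (Set.mem_univ s) (Set.mem_univ t) h (hdiff t)
    rw [slope_def_field, div_le_iff₀ (by linarith)] at h2
    nlinarith
  · simp [h]
  · have h2 := hc.deriv_le_slope (Set.mem_univ t) (Set.mem_univ s) h (hdiff t)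
    rw [slope_def_field, le_div_iff₀ (by linarith)] at h2
    nlinarith

/-- `conj l` is attained at the tangency point: value and domain membership. -/
lemma conj_at_deriv (l : ℝ → ℝ) (hdiff : Differentiable ℝ l)
    (hc : ConvexOn ℝ Set.univ l) (t : ℝ) :
    deriv l t ∈ domConj l ∧ conj l (deriv l t) = deriv l t * t - l t := by
  have hub : ∀ y ∈ Set.range (fun s => deriv l t * s - l s), y ≤ deriv l t * t - l t := by
    rintro y ⟨s, rfl⟩
    show deriv l t * s - l s ≤ deriv l t * t - l t
    have := tangent_le l hdiff hc t s
    have h2 := mul_sub (deriv l t) s t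
    linarith
  have hlub : IsLUB (Set.range fun s => deriv l t * s - l s) (deriv l t * t - l t) := by
    constructor
    · exact hub
    · intro b hb
      exact hb ⟨t, rfl⟩
  exact ⟨⟨_, hub⟩, hlub.csSup_eq ⟨_, ⟨t, rfl⟩⟩⟩

/-- a global supporting slope is the derivative -/
lemma support_eq_deriv (l : ℝ → ℝ) (hdiff : Differentiable ℝ l) (t m : ℝ)
    (h : ∀ s, l t + m * (s - t) ≤ l s) : m = deriv l t := by
  have hmin : IsMinOn (fun s => l s - m * s) Set.univ t := by
    intro s _
    have := h s
    simp only [Set.mem_setOf_eq]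
    nlinarith
  have hloc : IsLocalMin (fun s => l s - m * s) t := by
    have := hmin.isLocalMin (by simp [Filter.univ_mem])
    exact this
  have hd : deriv (fun s => l s - m * s) t = deriv l t - m := by
    have h1 : HasDerivAt (fun s => l s - m * s) (deriv l t - m) t := by
      exact (((hdiff t).hasDerivAt).sub ((hasDerivAt_id t).const_mul m)).congr_deriv (by ring)
    exact h1.deriv
  have := hloc.deriv_eq_zero
  rw [hd] at this
  linarith

theorem stmt0 (l : ℝ → ℝ) (γ : ℝ) (hγ : 0 < γ)
    (hdiff : Differentiable ℝ l)
    (hsc : StrictConvexOn ℝ Set.univ l)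
    (hsmooth : ∀ a b : ℝ, |deriv l a - deriv l b| ≤ γ * |a - b|)
    (wbar : ℝ) (hwbar : DifferentiableAt ℝ (conj l) wbar)
    (η : ℝ) (hη : η ∈ Set.Ioc (0 : ℝ) 1) (v : ℝ)
    (wplus : ℝ) (hwplusdom : wplus ∈ domConj l)
    (hmin : ∀ w ∈ domConj l,
      -(η * (v - deriv (conj l) wbar)) * wplus
          + (conj l wplus - conj l wbar - deriv (conj l) wbar * (wplus - wbar))
        ≤ -(η * (v - deriv (conj l) wbar)) * w
          + (conj l w - conj l wbar - deriv (conj l) wbar * (w - wbar))) :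
    HasDerivAt (conj l) ((1 - η) * deriv (conj l) wbar + η * v) wplus
      ∧ wplus = deriv l ((1 - η) * deriv (conj l) wbar + η * v) := by
  have hc : ConvexOn ℝ Set.univ l := hsc.convexOn
  set p := deriv (conj l) wbar with hp
  set t := (1 - η) * p + η * v with ht
  -- Step 1: wplus = deriv l t
  obtain ⟨hdomt, hvalt⟩ := conj_at_deriv l hdiff hc t
  have h1 := hmin (deriv l t) hdomt
  have hkey : conj l wplus - t * wplus ≤ conj l (deriv l t) - t * deriv l t := by
    have e1 : t * wplus = η * (v - p) * wplus + p * wplus := by rw [ht]; ring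
    have e2 : t * deriv l t = η * (v - p) * deriv l t + p * deriv l t := by rw [ht]; ring
    have e3 : p * (wplus - wbar) = p * wplus - p * wbar := by ring
    have e4 : p * (deriv l t - wbar) = p * deriv l t - p * wbar := by ring
    linarith
  have hle : conj l wplus ≤ t * wplus - l t := by
    have : conj l (deriv l t) - t * deriv l t = -(l t) := by rw [hvalt]; ring
    linarith
  have hge : wplus * t - l t ≤ conj l wplus := le_csSup hwplusdom ⟨t, rfl⟩
  have heq : conj l wplus = t * wplus - l t := by
    have : wplus * t = t * wplus := mul_comm _ _
    linarith
  have hsupport : ∀ s, l t + wplus * (s - t) ≤ l s := by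
    intro s
    have hs : wplus * s - l s ≤ conj l wplus := le_csSup hwplusdom ⟨s, rfl⟩
    rw [heq] at hs
    nlinarith [hs]
  have hwp : wplus = deriv l t := support_eq_deriv l hdiff t wplus hsupport
  refine ⟨?_, hwp⟩
  -- Step 2: HasDerivAt (conj l) t (deriv l t)
  rw [hwp]
  set D := deriv l with hD
  have hsm : StrictMono D := by
    have := hsc.strictMonoOn_deriv (fun x _ => hdiff x)
    exact fun a b hab => this (Set.mem_univ a) (Set.mem_univ b) hab
  have hcont : Continuous D := by
    have hl : LipschitzWith (Real.toNNReal γ) D := by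
      apply LipschitzWith.of_dist_le_mul
      intro a b
      simpa [Real.dist_eq, Real.coe_toNNReal γ hγ.le] using hsmooth a b
    exact hl.continuous
  set w0 := D t with hw0
  have hconjw0 : conj l w0 = w0 * t - l t := hvalt
  rw [hasDerivAt_iff_tendsto_slope]
  rw [Metric.tendsto_nhdsWithin_nhds]
  intro ε hε
  have hε2 : (0:ℝ) < ε / 2 := by linarith
  have hd1 : D (t - ε / 2) < w0 := hsm (by linarith)
  have hd2 : w0 < D (t + ε / 2) := hsm (by linarith)
  refine ⟨min (w0 - D (t - ε / 2)) (D (t + ε / 2) - w0), by simp [hd1, hd2, sub_pos], ?_⟩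
  intro w hwne hwdist
  have hwne' : w ≠ w0 := hwne
  rw [Real.dist_eq] at hwdist
  have hlo : D (t - ε / 2) < w := by
    have := abs_lt.mp hwdist
    have h := this.1
    have := min_le_left (w0 - D (t - ε / 2)) (D (t + ε / 2) - w0)
    linarith
  have hhi : w < D (t + ε / 2) := by
    have := abs_lt.mp hwdist
    have h := this.2
    have := min_le_right (w0 - D (t - ε / 2)) (D (t + ε / 2) - w0)
    linarith
  -- find x with D x = w
  obtain ⟨x, hxmem, hxw⟩ : ∃ x ∈ Set.Ioo (t - ε / 2) (t + ε / 2), D x = w := by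
    have hsub := intermediate_value_Ioo (by linarith : t - ε / 2 ≤ t + ε / 2)
      (hcont.continuousOn : ContinuousOn D (Set.Icc (t - ε/2) (t + ε/2)))
    obtain ⟨x, hx, hxw⟩ := hsub ⟨hlo, hhi⟩
    exact ⟨x, hx, hxw⟩
  have hxt : |x - t| ≤ ε / 2 := by
    rcases hxmem with ⟨h1', h2'⟩
    rw [abs_le]; constructor <;> linarith
  obtain ⟨hdomx, hvalx⟩ := conj_at_deriv l hdiff hc x
  rw [← hD, hxw] at hdomx hvalx
  -- sandwich
  have hlow : w * t - l t ≤ conj l w := le_csSup hdomx ⟨t, rfl⟩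
  have htan : l t + w0 * (x - t) ≤ l x := tangent_le l hdiff hc t x
  have hnum1 : 0 ≤ conj l w - conj l w0 - t * (w - w0) := by
    rw [hconjw0]; nlinarith [hlow]
  have hnum2 : conj l w - conj l w0 - t * (w - w0) ≤ (x - t) * (w - w0) := by
    rw [hconjw0, hvalx]; nlinarith [htan]
  have hne : w - w0 ≠ 0 := sub_ne_zero.mpr hwne'
  rw [Real.dist_eq, slope_def_field]
  have hrw : (conj l w - conj l w0) / (w - w0) - t
      = (conj l w - conj l w0 - t * (w - w0)) / (w - w0) := by
    field_simp
  rw [hrw, abs_div]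
  have habs : |conj l w - conj l w0 - t * (w - w0)| ≤ (ε / 2) * |w - w0| := by
    rw [abs_of_nonneg hnum1]
    calc conj l w - conj l w0 - t * (w - w0) ≤ (x - t) * (w - w0) := hnum2
      _ ≤ |(x - t) * (w - w0)| := le_abs_self _
      _ = |x - t| * |w - w0| := abs_mul _ _
      _ ≤ (ε / 2) * |w - w0| := mul_le_mul_of_nonneg_right hxt (abs_nonneg _)
  have hwpos : 0 < |w - w0| := abs_pos.mpr hne
  calc |conj l w - conj l w0 - t * (w - w0)| / |w - w0|
      ≤ (ε / 2) * |w - w0| / |w - w0| := by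
        apply div_le_div_of_nonneg_right habs hwpos.le
      _ = ε / 2 := by field_simp
      _ < ε := by linarith
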